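/- Let λ be an ordinal and ⟨w_i : i < γ⟩ a sequence of subsets of λ such that there is no countably infinite u ⊆ λ with u ∩ w_i finite for every i < γ. For an infinite v ⊆ λ let i(v) be the least i with v ∩ w_i infinite, and define cl(u) = u ∪ {0} ∪ ⋃{ w_{i(v)} : v a countably infinite subset of u }. Then there is no sequence ⟨u_n : n < ω⟩ of subsets of λ with u_{n+1} ⊆ u_n and u_n ⊄ cl(u_{n+1}) for all n. -/
import Mathlib


universe u

/-- `idx γ w v` : the least `i < γ` such that `v ∩ w i` is infinite. -/
noncomputable def idx (γ : Ordinal.{u}) (w : Ordinal.{u} → Set Ordinal.{u})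
    (v : Set Ordinal.{u}) : Ordinal.{u} :=
  sInf {i | i < γ ∧ (v ∩ w i).Infinite}

/-- `cl γ w u = u ∪ {0} ∪ ⋃ { w (idx v) : v a countably infinite subset of u }`. -/
noncomputable def cl (γ : Ordinal.{u}) (w : Ordinal.{u} → Set Ordinal.{u})
    (u : Set Ordinal.{u}) : Set Ordinal.{u} :=
  u ∪ {0} ∪ ⋃ v ∈ {v : Set Ordinal.{u} | v ⊆ u ∧ v.Countable ∧ v.Infinite}, w (idx γ w v)

/-- If `⟨w i : i < γ⟩` is a family of subsets of `λ` such that there is no countably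
infinite `u ⊆ λ` with `u ∩ w i` finite for every `i < γ`, then there is no decreasing
sequence `⟨u n : n < ω⟩` of subsets of `λ` with `u n ⊄ cl (u (n+1))` for all `n`. -/
theorem stmt_3 (lam γ : Ordinal.{u}) (w : Ordinal.{u} → Set Ordinal.{u})
    (hw : ∀ i < γ, w i ⊆ Set.Iio lam)
    (hmeet : ¬ ∃ v : Set Ordinal.{u}, v ⊆ Set.Iio lam ∧ v.Countable ∧ v.Infinite ∧
      ∀ i < γ, (v ∩ w i).Finite) :
    ¬ ∃ u : ℕ → Set Ordinal.{u},
      (∀ n, u n ⊆ Set.Iio lam) ∧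
      (∀ n, u (n + 1) ⊆ u n) ∧
      (∀ n, ¬ u n ⊆ cl γ w (u (n + 1))) := by
  rintro ⟨u, hsub, hmono, hns⟩
  have hex : ∀ n, ∃ x, x ∈ u n ∧ x ∉ cl γ w (u (n + 1)) := fun n =>
    Set.not_subset.1 (hns n)
  choose a ha hacl using hex
  -- monotonicity of u
  have humono : ∀ {m n : ℕ}, m ≤ n → u n ⊆ u m := by
    intro m n h
    induction h with
    | refl => exact subset_rfl
    | step _ ih => exact (hmono _).trans ih
  -- a m ∉ u (m+1)
  have hanotin : ∀ m, a m ∉ u (m + 1) := fun m hm =>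
    hacl m (Or.inl (Or.inl hm))
  -- injectivity of a
  have hainj : Function.Injective a := by
    intro m n hmn
    by_contra hne
    rcases Nat.lt_or_ge m n with h | h
    · exact hanotin m (hmn ▸ humono h (ha n))
    · have h' : n < m := lt_of_le_of_ne h (Ne.symm hne)
      exact hanotin n (hmn ▸ humono h' (ha m))
  set v : ℕ → Set Ordinal.{u} := fun n => a '' Set.Ioi n with hv
  have hvsub : ∀ n, v n ⊆ u (n + 1) := by
    rintro n _ ⟨m, hm, rfl⟩
    exact humono hm (ha m)
  have hvlam : ∀ n, v n ⊆ Set.Iio lam := fun n => (hvsub n).trans (hsub _)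
  have hvc : ∀ n, (v n).Countable := fun n => ((Set.Ioi n).to_countable).image a
  have hvi : ∀ n, (v n).Infinite := fun n =>
    (Set.Ioi_infinite n).image (hainj.injOn)
  push_neg at hmeet
  -- the index set for v n is nonempty
  have hSne : ∀ n, {i | i < γ ∧ (v n ∩ w i).Infinite}.Nonempty := by
    intro n
    rcases hmeet (v n) (hvlam n) (hvc n) (hvi n) with ⟨i, hiγ, hinf⟩
    exact ⟨i, hiγ, hinf⟩
  have hidx_mem : ∀ n, idx γ w (v n) ∈ {i | i < γ ∧ (v n ∩ w i).Infinite} := fun n =>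
    csInf_mem (hSne n)
  set i := idx γ w (v 0) with hi
  have hi0 := hidx_mem 0
  -- v n ∩ w i is infinite for every n
  have hkey : ∀ n, (v n ∩ w i).Infinite := by
    intro n
    have hF : (a '' Set.Icc 1 n).Finite := (Set.finite_Icc 1 n).image a
    have hd : (v 0 ∩ w i) \ (a '' Set.Icc 1 n) ⊆ v n ∩ w i := by
      rintro x ⟨⟨⟨m, hm, rfl⟩, hxw⟩, hxF⟩
      refine ⟨⟨m, ?_, rfl⟩, hxw⟩
      by_contra hmn
      exact hxF ⟨m, ⟨hm, Nat.le_of_not_lt hmn⟩, rfl⟩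
    exact (hi0.2.diff hF).mono hd
  -- idx (v n) = i for every n
  have hidx_eq : ∀ n, idx γ w (v n) = i := by
    intro n
    refine le_antisymm (csInf_le' ⟨hi0.1, hkey n⟩) ?_
    have hSS : {j | j < γ ∧ (v n ∩ w j).Infinite} ⊆ {j | j < γ ∧ (v 0 ∩ w j).Infinite} := by
      rintro j ⟨hjγ, hjinf⟩
      refine ⟨hjγ, hjinf.mono (Set.inter_subset_inter_left _ ?_)⟩
      rintro _ ⟨m, hm, rfl⟩
      exact ⟨m, lt_of_le_of_lt (Nat.zero_le n) hm, rfl⟩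
    exact csInf_le_csInf (OrderBot.bddBelow _) (hSne n) hSS
  -- a n ∉ w i for all n
  have hanw : ∀ n, a n ∉ w i := by
    intro n hx
    refine hacl n (Or.inr ?_)
    exact Set.mem_biUnion ⟨hvsub n, hvc n, hvi n⟩ (by rwa [hidx_eq n])
  -- but v 0 ∩ w i is infinite, in particular nonempty
  rcases (hkey 0).nonempty with ⟨x, ⟨m, _, rfl⟩, hxw⟩
  exact hanw m hxw
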